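/- Assignment move lemma: let σ be a deterministic assignment, let π be a permutation of N with SD(R,π) = σ, and let 1 ≤ k < j ≤ n be such that σ(π(j)) is agent π(j)'s most preferred house among the houses remaining after the first k agents of π have picked (i.e., among H ∖ {σ(π(1)),…,σ(π(k))}). Define π' = π(1) … π(k) π(j) π(k+1) … π(j−1) π(j+1) … π(n). Then SD(R,π') = σ. -/

import Mathlib

open Classical in
/-- `best r B` is the most preferred house in `B` according to the strict preference `r`
(an arbitrary element if no such house exists, which cannot happen for a nonempty `B` and a
strict linear order `r`). -/
noncomputable def best {H : Type*} [Nonempty H] (r : H → H → Prop) (B : Finset H) : H :=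
  if h : ∃ x, x ∈ B ∧ ∀ y ∈ B, y ≠ x → r x y then h.choose else Classical.arbitrary H

/-- `taken P π t` is the set of houses picked by the first `t` dictators `π 0, …, π (t-1)`,
each picking his most preferred house among the remaining ones. -/
noncomputable def taken {n : ℕ} {H : Type*} [Fintype H] [DecidableEq H] [Nonempty H]
    (P : Fin n → H → H → Prop) (π : Equiv.Perm (Fin n)) : ℕ → Finset H
  | 0 => ∅
  | t + 1 =>
      if h : t < n then
        insert (best (P (π ⟨t, h⟩)) (Finset.univ \ taken P π t)) (taken P π t)
      else taken P π t

/-- The serial dictatorship assignment: agent `i`, picking at position `π.symm i`, receives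
his most preferred house among those not taken by the agents preceding him in `π`. -/
noncomputable def SD {n : ℕ} {H : Type*} [Fintype H] [DecidableEq H] [Nonempty H]
    (P : Fin n → H → H → Prop) (π : Equiv.Perm (Fin n)) (i : Fin n) : H :=
  best (P i) (Finset.univ \ taken P π (π.symm i).1)

/-- `remainingAfter σ π k` is the set of houses remaining after the first `k` agents of `π`
have received their houses under the assignment `σ`, i.e. `H ∖ {σ(π 1), …, σ(π k)}`
(1-based positions; in Lean the first `k` agents are `π ⟨0,_⟩, …, π ⟨k-1,_⟩`). -/
def remainingAfter {n : ℕ} {H : Type*} [Fintype H] [DecidableEq H]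
    (σ : Fin n → H) (π : Equiv.Perm (Fin n)) (k : ℕ) : Finset H :=
  Finset.univ \ (Finset.univ.filter (fun s : Fin n => s.1 < k)).image (fun s => σ (π s))

section Aux
variable {H : Type*} [Nonempty H]

theorem best_eq_of {r : H → H → Prop} (hr : IsStrictTotalOrder H r) {B : Finset H} {x : H}
    (hx : x ∈ B) (hall : ∀ y ∈ B, y ≠ x → r x y) : best r B = x := by
  have hex : ∃ z, z ∈ B ∧ ∀ y ∈ B, y ≠ z → r z y := ⟨x, hx, hall⟩
  rw [best, dif_pos hex]
  by_contra hne
  have hrx : r x hex.choose := hall _ hex.choose_spec.1 hne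
  have hxr : r hex.choose x := hex.choose_spec.2 x hx (Ne.symm hne)
  exact (hr.irrefl x) (hr.trans _ _ _ hrx hxr)

theorem exists_best {r : H → H → Prop} (hr : IsStrictTotalOrder H r) (B : Finset H) :
    B.Nonempty → ∃ x ∈ B, ∀ y ∈ B, y ≠ x → r x y := by
  classical
  induction B using Finset.induction_on with
  | empty => intro h; simp at h
  | insert a s ha ih =>
    intro _
    rcases s.eq_empty_or_nonempty with hs | hs
    · subst hs; exact ⟨a, by simp, by simp⟩
    · obtain ⟨x, hxs, hx⟩ := ih hs
      rcases (by haveI := hr; exact trichotomous_of r a x : r a x ∨ a = x ∨ r x a) with hax | hax | hax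
      · refine ⟨a, Finset.mem_insert_self _ _, ?_⟩
        intro y hy hya
        rcases Finset.mem_insert.1 hy with rfl | hy
        · exact absurd rfl hya
        · rcases eq_or_ne y x with rfl | hyx
          · exact hax
          · exact hr.trans _ _ _ hax (hx y hy hyx)
      · subst hax
        refine ⟨a, Finset.mem_insert_self _ _, ?_⟩
        intro y hy hya
        rcases Finset.mem_insert.1 hy with rfl | hy
        · exact absurd rfl hya
        · exact hx y hy hya
      · refine ⟨x, Finset.mem_insert_of_mem hxs, ?_⟩
        intro y hy hyx
        rcases Finset.mem_insert.1 hy with rfl | hy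
        · exact hax
        · exact hx y hy hyx

theorem best_spec {r : H → H → Prop} (hr : IsStrictTotalOrder H r) {B : Finset H}
    (hB : B.Nonempty) :
    best r B ∈ B ∧ ∀ y ∈ B, y ≠ best r B → r (best r B) y := by
  obtain ⟨x, hx, hall⟩ := exists_best hr B hB
  rw [best_eq_of hr hx hall]; exact ⟨hx, hall⟩

end Aux

section Taken
variable {n : ℕ} {H : Type*} [Fintype H] [DecidableEq H] [Nonempty H]
  (P : Fin n → H → H → Prop) (π : Equiv.Perm (Fin n)) (σ : Fin n → H)

theorem taken_succ (hSD : SD P π = σ) (t : ℕ) (ht : t < n) :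
    taken P π (t + 1) = insert (σ (π ⟨t, ht⟩)) (taken P π t) := by
  have hb : best (P (π ⟨t, ht⟩)) (Finset.univ \ taken P π t) = σ (π ⟨t, ht⟩) := by
    have := congrFun hSD (π ⟨t, ht⟩)
    simpa [SD, Equiv.symm_apply_apply] using this
  rw [taken, dif_pos ht, hb]

theorem taken_eq (hSD : SD P π = σ) :
    ∀ t, t ≤ n → taken P π t =
      (Finset.univ.filter (fun s : Fin n => s.1 < t)).image (fun s => σ (π s)) := by
  intro t
  induction t with
  | zero => intro _; simp [taken]
  | succ t ih =>
    intro ht'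
    have ht : t < n := ht'
    rw [taken_succ P π σ hSD t ht, ih (le_of_lt ht)]
    have hf : (Finset.univ.filter (fun s : Fin n => s.1 < t + 1)) =
        insert ⟨t, ht⟩ (Finset.univ.filter (fun s : Fin n => s.1 < t)) := by
      ext s; simp [Fin.ext_iff]; omega
    rw [hf, Finset.image_insert]

theorem taken_card (hSD : SD P π = σ) : ∀ t, t ≤ n → (taken P π t).card ≤ t := by
  intro t
  induction t with
  | zero => intro _; simp [taken]
  | succ t ih =>
    intro ht'
    have ht : t < n := ht'
    rw [taken_succ P π σ hSD t ht]
    exact le_trans (Finset.card_insert_le _ _) (by omega ; )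

theorem sdiff_taken_nonempty (hcard : Fintype.card H = n) (hSD : SD P π = σ)
    (t : ℕ) (ht : t < n) : (Finset.univ \ taken P π t).Nonempty := by
  rw [← Finset.card_pos, Finset.card_sdiff_of_subset (Finset.subset_univ _), Finset.card_univ, hcard]
  have := taken_card P π σ hSD t (le_of_lt ht)
  omega

theorem not_mem_taken (hσ : Function.Injective σ) (hSD : SD P π = σ)
    (u : Fin n) (t : ℕ) (htn : t ≤ n) (htu : t ≤ u.1) : σ (π u) ∉ taken P π t := by
  rw [taken_eq P π σ hSD t htn]
  simp only [Finset.mem_image, Finset.mem_filter, Finset.mem_univ, true_and]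
  rintro ⟨s, hs, heq⟩
  have : s = u := π.injective (hσ heq)
  omega

end Taken

noncomputable def Saux {n : ℕ} {H : Type*} [Fintype H] [DecidableEq H] [Nonempty H]
    (P : Fin n → H → H → Prop) (π : Equiv.Perm (Fin n)) (a : H) (k j : ℕ) (t : ℕ) : Finset H :=
  if t ≤ k then taken P π t
  else if t ≤ j then insert a (taken P π (t - 1))
  else taken P π t


/-- Assignment move lemma: let `σ` be a deterministic assignment with `SD P π = σ`, and let
`1 ≤ k < j ≤ n` be such that `σ(π j)` (where `π j` is the agent at 1-based position `j`,
i.e. `π ⟨j-1, _⟩`) is that agent's most preferred house among the houses remaining after the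
first `k` agents of `π` have picked.  Then the permutation `π'` obtained from `π` by moving
this agent to position `k+1` (shifting positions `k+1, …, j-1` back by one and leaving the
first `k` and the last `n-j` positions unchanged) also satisfies `SD P π' = σ`. -/
theorem sd_assignment_move {n : ℕ} {H : Type*} [Fintype H] [DecidableEq H] [Nonempty H]
    (hcard : Fintype.card H = n)
    (P : Fin n → H → H → Prop) (hP : ∀ i, IsStrictTotalOrder H (P i))
    (σ : Fin n → H) (hσ : Function.Bijective σ)
    (π π' : Equiv.Perm (Fin n))
    (k j : ℕ) (hk : 1 ≤ k) (hkj : k < j) (hj : j ≤ n)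
    (hSD : SD P π = σ)
    (hmem : σ (π ⟨j - 1, by omega⟩) ∈ remainingAfter σ π k)
    (hbest : ∀ h' ∈ remainingAfter σ π k, h' ≠ σ (π ⟨j - 1, by omega⟩) →
      P (π ⟨j - 1, by omega⟩) (σ (π ⟨j - 1, by omega⟩)) h')
    (h1 : ∀ t : Fin n, t.1 < k → π' t = π t)
    (h2 : π' ⟨k, by omega⟩ = π ⟨j - 1, by omega⟩)
    (h3 : ∀ t : Fin n, k < t.1 → t.1 ≤ j - 1 →
      π' t = π ⟨t.1 - 1, lt_of_le_of_lt (Nat.sub_le t.1 1) t.2⟩)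
    (h4 : ∀ t : Fin n, j - 1 < t.1 → π' t = π t) :
    SD P π' = σ := by
  have hσinj := hσ.1
  have hjn : j - 1 < n := by omega
  have hstep : ∀ (t : ℕ) (ht : t < n),
      best (P (π ⟨t, ht⟩)) (Finset.univ \ taken P π t) = σ (π ⟨t, ht⟩) := by
    intro t ht
    have := congrFun hSD (π ⟨t, ht⟩)
    simpa [SD, Equiv.symm_apply_apply] using this
  have hrem : Finset.univ \ taken P π k = remainingAfter σ π k := by
    rw [taken_eq P π σ hSD k (by omega)]; rfl
  have key : ∀ (t : ℕ) (ht : t < n),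
      taken P π' t = Saux P π (σ (π ⟨j - 1, hjn⟩)) k j t →
      best (P (π' ⟨t, ht⟩)) (Finset.univ \ taken P π' t) = σ (π' ⟨t, ht⟩) ∧
        taken P π' (t + 1) = Saux P π (σ (π ⟨j - 1, hjn⟩)) k j (t + 1) := by
    intro t ht hS
    have hstep' : taken P π' (t + 1) =
        insert (best (P (π' ⟨t, ht⟩)) (Finset.univ \ taken P π' t)) (taken P π' t) := by
      rw [taken, dif_pos ht]
    rcases lt_trichotomy t k with hc | hc | hc
    · -- t < k
      have hπ : π' ⟨t, ht⟩ = π ⟨t, ht⟩ := h1 ⟨t, ht⟩ hc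
      have hSt : Saux P π (σ (π ⟨j - 1, hjn⟩)) k j t = taken P π t := if_pos (le_of_lt hc)
      have hb := hstep t ht
      refine ⟨by rw [hS, hSt, hπ]; exact hb, ?_⟩
      rw [hstep', hS, hSt, hπ, hb]
      have h5 : Saux P π (σ (π ⟨j - 1, hjn⟩)) k j (t + 1) = taken P π (t + 1) :=
        if_pos (by omega)
      rw [h5, taken_succ P π σ hSD t ht]
    · -- t = k
      have hkn : k < n := by omega
      have hπ : π' ⟨t, ht⟩ = π ⟨j - 1, hjn⟩ := by
        have he : (⟨t, ht⟩ : Fin n) = ⟨k, hkn⟩ := by simp [Fin.ext_iff, hc]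
        rw [he]; exact h2
      have hSt : Saux P π (σ (π ⟨j - 1, hjn⟩)) k j t = taken P π t :=
        if_pos (le_of_eq hc)
      have hbk : best (P (π ⟨j - 1, hjn⟩)) (Finset.univ \ taken P π k) =
          σ (π ⟨j - 1, hjn⟩) := by
        rw [hrem]
        exact best_eq_of (hP _) hmem hbest
      refine ⟨by rw [hS, hSt, hπ, hc]; exact hbk, ?_⟩
      rw [hstep', hS, hSt, hπ, hc, hbk]
      have h5 : Saux P π (σ (π ⟨j - 1, hjn⟩)) k j (k + 1) =
          insert (σ (π ⟨j - 1, hjn⟩)) (taken P π k) := by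
        rw [Saux, if_neg (by omega), if_pos (by omega), Nat.add_sub_cancel]
      rw [h5]
    · -- k < t
      by_cases hcj : t < j
      · -- k < t < j
        have ht1 : t - 1 < n := by omega
        have hπ : π' ⟨t, ht⟩ = π ⟨t - 1, ht1⟩ := h3 ⟨t, ht⟩ hc (show t ≤ j - 1 by omega)
        have hSt : Saux P π (σ (π ⟨j - 1, hjn⟩)) k j t =
            insert (σ (π ⟨j - 1, hjn⟩)) (taken P π (t - 1)) := by
          rw [Saux, if_neg (by omega), if_pos (by omega)]
        have hD := sdiff_taken_nonempty P π σ hcard hSD (t - 1) ht1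
        have hspec := best_spec (hP (π ⟨t - 1, ht1⟩)) hD
        rw [hstep (t - 1) ht1] at hspec
        have hne : σ (π ⟨t - 1, ht1⟩) ≠ σ (π ⟨j - 1, hjn⟩) := by
          intro h
          have h' := π.injective (hσinj h)
          rw [Fin.mk.injEq] at h'
          omega
        have hmem' : σ (π ⟨t - 1, ht1⟩) ∈
            Finset.univ \ insert (σ (π ⟨j - 1, hjn⟩)) (taken P π (t - 1)) := by
          have h0 := hspec.1
          simp only [Finset.mem_sdiff, Finset.mem_insert, Finset.mem_univ, true_and] at h0 ⊢
          push_neg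
          exact ⟨hne, h0⟩
        have hall' : ∀ y ∈ Finset.univ \ insert (σ (π ⟨j - 1, hjn⟩)) (taken P π (t - 1)),
            y ≠ σ (π ⟨t - 1, ht1⟩) → P (π ⟨t - 1, ht1⟩) (σ (π ⟨t - 1, ht1⟩)) y := by
          intro y hy hyne
          refine hspec.2 y ?_ hyne
          simp only [Finset.mem_sdiff, Finset.mem_insert, Finset.mem_univ, true_and] at hy ⊢
          tauto
        have hbt : best (P (π ⟨t - 1, ht1⟩))
            (Finset.univ \ insert (σ (π ⟨j - 1, hjn⟩)) (taken P π (t - 1))) =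
            σ (π ⟨t - 1, ht1⟩) := best_eq_of (hP _) hmem' hall'
        refine ⟨by rw [hS, hSt, hπ]; exact hbt, ?_⟩
        rw [hstep', hS, hSt, hπ, hbt]
        have h5 : Saux P π (σ (π ⟨j - 1, hjn⟩)) k j (t + 1) =
            insert (σ (π ⟨j - 1, hjn⟩)) (taken P π t) := by
          rw [Saux, if_neg (by omega), if_pos (by omega), Nat.add_sub_cancel]
        rw [h5]
        have h6 : taken P π t = insert (σ (π ⟨t - 1, ht1⟩)) (taken P π (t - 1)) := by
          have h7 := taken_succ P π σ hSD (t - 1) ht1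
          rwa [show t - 1 + 1 = t by omega] at h7
        rw [h6, Finset.insert_comm]
      · -- j ≤ t
        have hπ : π' ⟨t, ht⟩ = π ⟨t, ht⟩ := h4 ⟨t, ht⟩ (show j - 1 < t by omega)
        have hSt : Saux P π (σ (π ⟨j - 1, hjn⟩)) k j t = taken P π t := by
          by_cases htj : t ≤ j
          · have htj' : t = j := by omega
            rw [Saux, if_neg (by omega), if_pos htj]
            have h7 := taken_succ P π σ hSD (j - 1) hjn
            rw [show j - 1 + 1 = j by omega] at h7
            rw [show t - 1 = j - 1 by omega, ← h7, htj']
          · rw [Saux, if_neg (by omega), if_neg (by omega)]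
        have hb := hstep t ht
        refine ⟨by rw [hS, hSt, hπ]; exact hb, ?_⟩
        rw [hstep', hS, hSt, hπ, hb]
        have h5 : Saux P π (σ (π ⟨j - 1, hjn⟩)) k j (t + 1) = taken P π (t + 1) := by
          rw [Saux, if_neg (by omega), if_neg (by omega)]
        rw [h5, taken_succ P π σ hSD t ht]
  have main : ∀ t, t ≤ n → taken P π' t = Saux P π (σ (π ⟨j - 1, hjn⟩)) k j t := by
    intro t
    induction t with
    | zero => intro _; rw [Saux, if_pos (by omega)]; rfl
    | succ t ih =>
      intro ht'
      exact (key t ht' (ih (by omega))).2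
  funext i
  have ht : (π'.symm i).1 < n := (π'.symm i).2
  have hkey := (key (π'.symm i).1 ht (main _ (le_of_lt ht))).1
  have hi : π' ⟨(π'.symm i).1, ht⟩ = i := by
    have he : (⟨(π'.symm i).1, ht⟩ : Fin n) = π'.symm i := rfl
    rw [he, Equiv.apply_symm_apply]
  rw [hi] at hkey
  simpa [SD] using hkey
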